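/- Let u : H_code → H_phys be a linear isometry between complex Hilbert spaces and let Δ be a bounded self-adjoint positive invertible operator on H_phys that maps the range of u into the range of u. Then for every Ψ ∈ H_code, ⟨Ψ, log(u†Δu)Ψ⟩ = ⟨uΨ, (log Δ)(uΨ)⟩, where log is applied via the continuous functional calculus and u† is the Hilbert-space adjoint of u. (In particular, the relative entropy computed from the compressed relative modular operator u†Δu on H_code equals the relative entropy computed from Δ on H_phys.) -/

import Mathlib

set_option maxHeartbeats 2000000 in
open ContinuousLinearMap Polynomial in
private lemma compress_cfc_aux {H₁ H₂ : Type*}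
    [NormedAddCommGroup H₁] [InnerProductSpace ℂ H₁] [CompleteSpace H₁]
    [NormedAddCommGroup H₂] [InnerProductSpace ℂ H₂] [CompleteSpace H₂]
    [Nontrivial H₁]
    (u : H₁ →ₗᵢ[ℂ] H₂) (Δ : H₂ →L[ℂ] H₂) (hΔ : IsSelfAdjoint Δ)
    (hspec : spectrum ℝ Δ ⊆ Set.Ioi (0 : ℝ))
    (hrange : ∀ y ∈ LinearMap.range u.toLinearMap, Δ y ∈ LinearMap.range u.toLinearMap) :
    cfc Real.log ((adjoint u.toContinuousLinearMap) ∘L Δ ∘L u.toContinuousLinearMap)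
      = (adjoint u.toContinuousLinearMap) ∘L (cfc Real.log Δ) ∘L u.toContinuousLinearMap := by
  set u' : H₁ →L[ℂ] H₂ := u.toContinuousLinearMap with hu'def
  set T : H₁ →L[ℂ] H₁ := (adjoint u') ∘L Δ ∘L u' with hTdef
  have huu : adjoint u' ∘L u' = 1 :=
    (norm_map_iff_adjoint_comp_self u').mp (fun x => u.norm_map x)
  have huu' : ∀ y : H₁, adjoint u' (u' y) = y := by
    intro y
    have := DFunLike.congr_fun huu y
    simpa using this
  have hΔ' : adjoint Δ = Δ := isSelfAdjoint_iff'.mp hΔ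
  have hT_sa : IsSelfAdjoint T := by
    rw [isSelfAdjoint_iff', hTdef]
    rw [ContinuousLinearMap.adjoint_comp, ContinuousLinearMap.adjoint_comp, hΔ',
      adjoint_adjoint]
    rfl
  have : Nontrivial H₂ := by
    obtain ⟨x, y, hxy⟩ := exists_pair_ne H₁
    exact ⟨u x, u y, fun h => hxy (u.injective h)⟩
  -- intertwining relation
  have hintx : ∀ x : H₁, Δ (u' x) = u' (T x) := by
    intro x
    obtain ⟨y, hy⟩ := hrange (u' x) ⟨x, rfl⟩
    have hy' : u' y = Δ (u' x) := hy
    have : T x = y := by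
      rw [hTdef]
      simp only [ContinuousLinearMap.comp_apply]
      rw [← hy', huu' y]
    rw [this, hy']
  have hpow : ∀ (n : ℕ) (x : H₁), (Δ ^ n) (u' x) = u' ((T ^ n) x) := by
    intro n
    induction n with
    | zero => intro x; simp
    | succ n ih =>
      intro x
      rw [pow_succ, pow_succ, ContinuousLinearMap.mul_apply, ContinuousLinearMap.mul_apply,
        hintx x, ih (T x)]
  have hpolyx : ∀ (p : ℝ[X]) (x : H₁), (aeval Δ p) (u' x) = u' ((aeval T p) x) := by
    intro p
    induction p using Polynomial.induction_on with
    | C r =>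
      intro x
      simp only [aeval_C]
      rw [Algebra.algebraMap_eq_smul_one, Algebra.algebraMap_eq_smul_one]
      simp only [ContinuousLinearMap.smul_apply, ContinuousLinearMap.one_apply]
      rw [map_smul_of_tower]
    | add p q hp hq =>
      intro x
      simp only [map_add, ContinuousLinearMap.add_apply, hp x, hq x, map_add]
    | monomial n r _ =>
      intro x
      simp only [map_mul, aeval_C, map_pow, aeval_X, ContinuousLinearMap.mul_apply]
      rw [Algebra.algebraMap_eq_smul_one, Algebra.algebraMap_eq_smul_one]
      simp only [ContinuousLinearMap.smul_apply, ContinuousLinearMap.one_apply]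
      rw [hpow (n + 1) x, map_smul_of_tower]
  have hcompp : ∀ (p : ℝ[X]), aeval T p = (adjoint u') ∘L (aeval Δ p) ∘L u' := by
    intro p
    ext x
    simp only [ContinuousLinearMap.comp_apply]
    rw [hpolyx p x, huu']
  -- spectral bounds
  obtain ⟨r, hr0, hrΔ⟩ := (CFC.exists_pos_algebraMap_le_iff (a := Δ) hΔ).mpr
    (fun x hx => hspec hx)
  have hrT : algebraMap ℝ (H₁ →L[ℂ] H₁) r ≤ T := by
    have hpos : (Δ - algebraMap ℝ (H₂ →L[ℂ] H₂) r).IsPositive :=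
      (ContinuousLinearMap.le_def _ _).mp hrΔ
    have hconj := hpos.adjoint_conj u'
    have heq : (adjoint u') ∘L (Δ - algebraMap ℝ (H₂ →L[ℂ] H₂) r) ∘L u'
        = T - algebraMap ℝ (H₁ →L[ℂ] H₁) r := by
      ext x
      simp only [ContinuousLinearMap.comp_apply, ContinuousLinearMap.sub_apply]
      rw [Algebra.algebraMap_eq_smul_one, Algebra.algebraMap_eq_smul_one]
      simp only [ContinuousLinearMap.smul_apply, ContinuousLinearMap.one_apply]
      rw [map_sub, map_smul_of_tower, huu']
      rfl
    rw [heq] at hconj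
    exact (ContinuousLinearMap.le_def _ _).mpr hconj
  set M : ℝ := max ‖Δ‖ ‖T‖ with hMdef
  have hΔIcc : spectrum ℝ Δ ⊆ Set.Icc r M := by
    intro x hx
    refine ⟨(algebraMap_le_iff_le_spectrum hΔ).mp hrΔ x hx, ?_⟩
    exact le_trans ((le_algebraMap_iff_spectrum_le hΔ).mp hΔ.le_algebraMap_norm_self x hx)
      (le_max_left _ _)
  have hTIcc : spectrum ℝ T ⊆ Set.Icc r M := by
    intro x hx
    refine ⟨(algebraMap_le_iff_le_spectrum hT_sa).mp hrT x hx, ?_⟩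
    exact le_trans ((le_algebraMap_iff_spectrum_le hT_sa).mp hT_sa.le_algebraMap_norm_self x hx)
      (le_max_right _ _)
  have hIcc0 : Set.Icc r M ⊆ {(0:ℝ)}ᶜ := fun x hx => by
    simp only [Set.mem_compl_iff, Set.mem_singleton_iff]
    exact ne_of_gt (lt_of_lt_of_le hr0 hx.1)
  have hflog : ContinuousOn Real.log (Set.Icc r M) := Real.continuousOn_log.mono hIcc0
  have hflogΔ : ContinuousOn Real.log (spectrum ℝ Δ) := hflog.mono hΔIcc
  have hflogT : ContinuousOn Real.log (spectrum ℝ T) := hflog.mono hTIcc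
  -- norm bounds on u' and its adjoint
  have hnu : ‖u'‖ ≤ 1 := u.norm_toContinuousLinearMap_le
  have hnau : ‖adjoint u'‖ ≤ 1 := by
    rw [LinearIsometryEquiv.norm_map ContinuousLinearMap.adjoint u']
    exact hnu
  -- approximation argument
  rw [← sub_eq_zero, ← norm_le_zero_iff]
  refine le_of_forall_pos_le_add ?_
  intro ε hε
  rw [zero_add]
  obtain ⟨p, hp⟩ := exists_polynomial_near_of_continuousOn r M Real.log hflog (ε/2)
    (by positivity)
  have hpc : Continuous fun x : ℝ => p.eval x := p.continuous
  have n1 : ‖cfc Real.log Δ - cfc (fun x => p.eval x) Δ‖ ≤ ε / 2 := by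
    rw [← cfc_sub Real.log (fun x => p.eval x) Δ hflogΔ hpc.continuousOn]
    refine norm_cfc_le (by positivity) fun x hx => ?_
    rw [Real.norm_eq_abs, abs_sub_comm]
    exact (hp x (hΔIcc hx)).le
  have n2 : ‖cfc Real.log T - cfc (fun x => p.eval x) T‖ ≤ ε / 2 := by
    rw [← cfc_sub Real.log (fun x => p.eval x) T hflogT hpc.continuousOn]
    refine norm_cfc_le (by positivity) fun x hx => ?_
    rw [Real.norm_eq_abs, abs_sub_comm]
    exact (hp x (hTIcc hx)).le
  have e1 : cfc (fun x => p.eval x) T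
      = (adjoint u') ∘L cfc (fun x => p.eval x) Δ ∘L u' := by
    rw [show (fun x : ℝ => p.eval x) = p.eval from rfl, cfc_polynomial p T hT_sa,
      cfc_polynomial p Δ hΔ, hcompp p]
  have hB : ‖cfc (fun x => p.eval x) T - (adjoint u') ∘L cfc Real.log Δ ∘L u'‖ ≤ ε / 2 := by
    rw [e1]
    have heq2 : (adjoint u') ∘L cfc (fun x => p.eval x) Δ ∘L u'
        - (adjoint u') ∘L cfc Real.log Δ ∘L u'
        = (adjoint u') ∘L ((cfc (fun x => p.eval x) Δ - cfc Real.log Δ) ∘L u') := by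
      ext x
      simp [ContinuousLinearMap.comp_apply, ContinuousLinearMap.sub_apply, map_sub]
    rw [heq2]
    set X : H₂ →L[ℂ] H₂ := cfc (fun x => p.eval x) Δ - cfc Real.log Δ with hXdef
    have hXn : ‖X‖ ≤ ε / 2 := by rw [hXdef, norm_sub_rev]; exact n1
    have hXu : ‖X ∘L u'‖ ≤ ‖X‖ := by
      refine le_trans (opNorm_comp_le _ _) ?_
      nlinarith [norm_nonneg X]
    refine le_trans (opNorm_comp_le _ _) ?_
    nlinarith [norm_nonneg (X ∘L u'), norm_nonneg (adjoint u')]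
  calc ‖cfc Real.log T - (adjoint u') ∘L cfc Real.log Δ ∘L u'‖
      ≤ ‖cfc Real.log T - cfc (fun x => p.eval x) T‖
        + ‖cfc (fun x => p.eval x) T - (adjoint u') ∘L cfc Real.log Δ ∘L u'‖ :=
        norm_sub_le_norm_sub_add_norm_sub _ _ _
    _ ≤ ε / 2 + ε / 2 := add_le_add n2 hB
    _ ≤ ε := by linarith

set_option maxHeartbeats 1000000 in
/-- if `Δ` is a bounded self-adjoint positive invertible operator
(spectrum contained in `(0,∞)`) on `H_phys` which preserves the range of the
isometry `u`, then for every `Ψ ∈ H_code`,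
`⟨Ψ, log(u†Δu)Ψ⟩ = ⟨uΨ, (log Δ)(uΨ)⟩`, i.e. the relative entropies computed
from the compressed relative modular operator and from `Δ` agree. -/
theorem relative_entropy_compression {H₁ H₂ : Type*}
    [NormedAddCommGroup H₁] [InnerProductSpace ℂ H₁] [CompleteSpace H₁]
    [NormedAddCommGroup H₂] [InnerProductSpace ℂ H₂] [CompleteSpace H₂]
    (u : H₁ →ₗᵢ[ℂ] H₂) (Δ : H₂ →L[ℂ] H₂) (hΔ : IsSelfAdjoint Δ)
    (hspec : spectrum ℝ Δ ⊆ Set.Ioi (0 : ℝ))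
    (hrange : ∀ y ∈ LinearMap.range u.toLinearMap, Δ y ∈ LinearMap.range u.toLinearMap) :
    ∀ Ψ : H₁,
      (inner ℂ Ψ ((cfc Real.log
          ((ContinuousLinearMap.adjoint u.toContinuousLinearMap) ∘L Δ ∘L
            u.toContinuousLinearMap)) Ψ) : ℂ) =
        (inner ℂ (u Ψ) ((cfc Real.log Δ) (u Ψ)) : ℂ) := by
  intro Ψ
  by_cases hsub : Subsingleton H₁
  · simp [Subsingleton.elim Ψ 0]
  · have : Nontrivial H₁ := not_subsingleton_iff_nontrivial.mp hsub
    rw [compress_cfc_aux u Δ hΔ hspec hrange]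
    simp only [ContinuousLinearMap.comp_apply]
    rw [ContinuousLinearMap.adjoint_inner_right]
    rfl
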